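/- Let G be a compact topological group acting continuously on a Hausdorff topological space X, and let A, B be countable subsets of X. Then there exists g ∈ G with g·A = B if and only if there is a bijection σ : A → B such that for every finite tuple (a_1,...,a_n) of elements of A there exists g ∈ G with g·a_i = σ(a_i) for all i. -/

import Mathlib

/-- For a compact topological group acting continuously on a Hausdorff space, and countable
subsets `A`, `B`: some `g` carries `A` onto `B` iff there is a bijection `σ : A → B` such that
every finite tuple from `A` is carried to its `σ`-image by some group element. -/
theorem stmt1 {G X : Type*} [Group G] [TopologicalSpace G] [IsTopologicalGroup G]
    [CompactSpace G] [TopologicalSpace X] [T2Space X] [MulAction G X] [ContinuousSMul G X]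
    (A B : Set X) (hA : A.Countable) (hB : B.Countable) :
    (∃ g : G, (fun a => g • a) '' A = B) ↔
      ∃ σ : A ≃ B, ∀ (n : ℕ) (t : Fin n → A),
        ∃ g : G, ∀ i, g • (t i : X) = ((σ (t i) : B) : X) := by
  constructor
  · rintro ⟨g, hg⟩
    have hmem : ∀ a : A, g • (a : X) ∈ B := fun a => hg ▸ ⟨a, a.2, rfl⟩
    have hmem' : ∀ b : B, g⁻¹ • (b : X) ∈ A := by
      intro b
      have hb : (b : X) ∈ (fun a => g • a) '' A := hg ▸ b.2
      obtain ⟨a, ha, hab⟩ := hb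
      simpa [← hab] using ha
    refine ⟨⟨fun a => ⟨g • (a : X), hmem a⟩, fun b => ⟨g⁻¹ • (b : X), hmem' b⟩, ?_, ?_⟩, ?_⟩
    · intro a; ext; simp
    · intro b; ext; simp
    · intro n t; exact ⟨g, fun i => rfl⟩
  · rintro ⟨σ, hσ⟩
    set Z : A → Set G := fun a => {g : G | g • (a : X) = ((σ a : B) : X)} with hZ
    have hclosed : ∀ a : A, IsClosed (Z a) := fun a =>
      isClosed_eq (continuous_id.smul continuous_const) continuous_const
    have hne : (⋂ a, Z a).Nonempty := by
      by_contra h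
      rw [Set.not_nonempty_iff_eq_empty] at h
      have := isCompact_univ (X := G)
      obtain ⟨t, ht⟩ := this.elim_finite_subfamily_closed Z hclosed
        (by rw [← h]; simp)
      -- enumerate t
      set l := t.toList with hl
      obtain ⟨g, hg⟩ := hσ l.length (fun i => l.get i)
      have : g ∈ Set.univ ∩ ⋂ a ∈ t, Z a := by
        refine ⟨trivial, ?_⟩
        simp only [Set.mem_iInter]
        intro a ha
        have : a ∈ l := by simpa [hl] using ha
        obtain ⟨i, hi⟩ := List.get_of_mem this
        rw [← hi]
        exact hg i
      rw [ht] at this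
      exact this
    obtain ⟨g, hg⟩ := hne
    simp only [Set.mem_iInter, hZ, Set.mem_setOf_eq] at hg
    refine ⟨g, ?_⟩
    ext x
    constructor
    · rintro ⟨a, ha, rfl⟩
      show g • a ∈ B
      rw [hg ⟨a, ha⟩]
      exact (σ ⟨a, ha⟩).2
    · intro hx
      refine ⟨σ.symm ⟨x, hx⟩, (σ.symm ⟨x, hx⟩).2, ?_⟩
      show g • ((σ.symm ⟨x, hx⟩ : A) : X) = x
      rw [hg (σ.symm ⟨x, hx⟩), σ.apply_symm_apply]
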